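/- arXiv:2411.17410 — 4 statements merged into one kernel-verified Lean document; each statement's English description precedes it below -/
import Mathlib

section
/- Let X be a scheme such that every point of X has an open neighborhood meeting only finitely many irreducible components of X. Suppose that for each point x of X, the nilradical of the local ring O_{X,x} is a prime ideal. Then the irreducible components of X are pairwise disjoint, and each irreducible component is open in X. -/
open AlgebraicGeometry

lemma aux_unique (X : Scheme) (h2 : ∀ x : X, (nilradical (X.presheaf.stalk x)).IsPrime)
    (x : X) (C : Set X) (hC : C ∈ irreducibleComponents X)
    (D : Set X) (hD : D ∈ irreducibleComponents X) (hxC : x ∈ C) (hxD : x ∈ D) : C = D := by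
  have hprime := h2 x
  have hnontriv : Nontrivial (X.presheaf.stalk x) := by
    refine ⟨0, 1, fun h01 ↦ hprime.ne_top ?_⟩
    rw [Ideal.eq_top_iff_one]
    exact h01 ▸ (nilradical (X.presheaf.stalk x)).zero_mem
  have hirr : IsIrreducible (Set.univ : Set (PrimeSpectrum (X.presheaf.stalk x))) := by
    have := (PrimeSpectrum.isIrreducible_zeroLocus_iff
      (⊥ : Ideal (X.presheaf.stalk x))).mpr (by
        have : (⊥ : Ideal (X.presheaf.stalk x)).radical = nilradical (X.presheaf.stalk x) := rfl
        rwa [this])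
    simpa [PrimeSpectrum.zeroLocus_bot] using this
  have himg : IsIrreducible {y : X | y ⤳ x} := by
    rw [← Scheme.range_fromSpecStalk, ← Set.image_univ]
    exact hirr.image _ (Continuous.continuousOn (X.fromSpecStalk x).base.hom.continuous)
  have hTirr : IsIrreducible (closure {y : X | y ⤳ x}) := himg.closure
  have key : ∀ E : Set X, E ∈ irreducibleComponents X → x ∈ E →
      E = closure {y : X | y ⤳ x} := by
    intro E hE hxE
    have hEc : IsClosed E := isClosed_of_mem_irreducibleComponents E hE
    have hgen : IsGenericPoint hE.1.genericPoint E := hE.1.isGenericPoint_genericPoint hEc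
    have hη : hE.1.genericPoint ⤳ x := hgen.specializes hxE
    have h1 : E ⊆ closure {y : X | y ⤳ x} := by
      rw [← hgen.def]
      exact closure_mono (Set.singleton_subset_iff.mpr hη)
    exact le_antisymm h1 (hE.2 hTirr h1)
  rw [key C hC hxC, key D hD hxD]

/-- Let `X` be a scheme such that every point of `X` has an open neighborhood
meeting only finitely many irreducible components of `X`.  Suppose that for each point `x` of
`X` the nilradical of the local ring `O_{X,x}` is a prime ideal.  Then the irreducible
components of `X` are pairwise disjoint, and each irreducible component is open in `X`. -/
theorem stmt_0 (X : Scheme)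
    (h1 : ∀ x : X, ∃ U : X.Opens, x ∈ U ∧
      {C ∈ irreducibleComponents X | ((U : Set X) ∩ C).Nonempty}.Finite)
    (h2 : ∀ x : X, (nilradical (X.presheaf.stalk x)).IsPrime) :
    (∀ C ∈ irreducibleComponents X, ∀ D ∈ irreducibleComponents X,
        C ≠ D → Disjoint C D) ∧
    (∀ C ∈ irreducibleComponents X, IsOpen C) := by
  have hdisj : ∀ C ∈ irreducibleComponents X, ∀ D ∈ irreducibleComponents X,
      C ≠ D → Disjoint C D := by
    intro C hC D hD hne
    rw [Set.disjoint_left]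
    intro x hxC hxD
    exact hne (aux_unique X h2 x C hC D hD hxC hxD)
  refine ⟨hdisj, fun C hC ↦ ?_⟩
  rw [isOpen_iff_forall_mem_open]
  intro x hxC
  obtain ⟨U, hxU, hfin⟩ := h1 x
  set S : Set (Set X) := {D ∈ irreducibleComponents X | ((U : Set X) ∩ D).Nonempty ∧ D ≠ C}
    with hS
  have hSfin : S.Finite := hfin.subset (fun D hD ↦ ⟨hD.1, hD.2.1⟩)
  refine ⟨(U : Set X) \ ⋃ D ∈ S, D, ?_, ?_, ?_⟩
  · intro y hy
    obtain ⟨hyU, hyD⟩ := hy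
    have hyE : y ∈ irreducibleComponent y := mem_irreducibleComponent
    have hE : irreducibleComponent y ∈ irreducibleComponents X :=
      irreducibleComponent_mem_irreducibleComponents y
    by_cases h : irreducibleComponent y = C
    · exact h ▸ hyE
    · exact absurd (Set.mem_biUnion (show irreducibleComponent y ∈ S from
        ⟨hE, ⟨y, hyU, hyE⟩, h⟩) hyE) hyD
  · exact U.isOpen.sdiff (Set.Finite.isClosed_biUnion hSfin
      (fun D hD ↦ isClosed_of_mem_irreducibleComponents D hD.1))
  · refine ⟨hxU, ?_⟩
    intro hx
    obtain ⟨D, hD, hxD⟩ := Set.mem_iUnion₂.mp hx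
    exact hD.2.2 (aux_unique X h2 x D hD.1 C hC hxD hxC)
end

section
/- Let A be a Noetherian integrally closed domain with fraction field K, and let M be a finite torsion-free A-module with an injective A-module endomorphism u. Then det(u ⊗ id_K : M ⊗_A K → M ⊗_A K) lies in A. -/
open scoped TensorProduct

open Polynomial Matrix

private lemma mulVec_pow_eig {n : Type*} [Fintype n] [DecidableEq n] {L : Type*} [CommRing L]
    (B : Matrix n n L) {x : n → L} {μ : L} (h : B *ᵥ x = μ • x) (k : ℕ) :
    (B ^ k) *ᵥ x = μ ^ k • x := by
  induction k with
  | zero => simp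
  | succ k ih =>
    rw [pow_succ', ← Matrix.mulVec_mulVec, ih, Matrix.mulVec_smul, h, smul_smul, ← pow_succ]

private lemma aeval_mulVec_eig {n : Type*} [Fintype n] [DecidableEq n] {L : Type*} [CommRing L]
    (B : Matrix n n L) {x : n → L} {μ : L} (h : B *ᵥ x = μ • x) (q : L[X]) :
    (Polynomial.aeval B q) *ᵥ x = q.eval μ • x := by
  induction q using Polynomial.induction_on' with
  | add p q hp hq => rw [map_add, Matrix.add_mulVec, hp, hq, eval_add, add_smul]
  | monomial k c =>
    rw [aeval_monomial, eval_monomial, Algebra.algebraMap_eq_smul_one, smul_mul_assoc, one_mul,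
      Matrix.smul_mulVec, mulVec_pow_eig B h k, smul_smul]

set_option maxHeartbeats 1000000 in
set_option synthInstance.maxHeartbeats 400000 in
/-- Let `A` be a Noetherian integrally closed domain with fraction field `K`,
and let `M` be a finite torsion-free `A`-module with an injective `A`-module endomorphism `u`.
Then `det (u ⊗ id_K : M ⊗_A K → M ⊗_A K)` lies in (the image of) `A`. -/
theorem stmt_2 (A : Type*) [CommRing A] [IsDomain A] [IsNoetherianRing A]
    [IsIntegrallyClosed A]
    (M : Type*) [AddCommGroup M] [Module A M] [Module.Finite A M]
    [NoZeroSMulDivisors A M]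
    (u : M →ₗ[A] M) (hu : Function.Injective u) :
    ∃ a : A,
      LinearMap.det (LinearMap.baseChange (FractionRing A) u) =
        algebraMap A (FractionRing A) a := by
  classical
  obtain ⟨p, pmonic, hp0⟩ := Algebra.IsIntegral.isIntegral (R := A) u
  have hp1 : Polynomial.aeval u p = 0 := by rwa [Polynomial.aeval_def]
  set K := FractionRing A
  set L := AlgebraicClosure K
  set V := K ⊗[A] M
  set v : V →ₗ[K] V := LinearMap.baseChange K u with hv
  haveI : Module.Finite K V := by infer_instance
  set b : Module.Basis (Fin (Module.finrank K V)) K V := Module.finBasis K V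
  set e := LinearMap.toMatrixAlgEquiv b
  set B := LinearMap.toMatrix b b v with hB
  have heB : e v = B := rfl
  have hdet : LinearMap.det v = B.det := (LinearMap.det_toMatrix b v).symm
  -- `v` satisfies `p`
  have hv0 : Polynomial.aeval v p = 0 := by
    have h := Polynomial.aeval_algHom_apply (Module.End.baseChangeHom A K M) u p
    have hveq : (Module.End.baseChangeHom A K M) u = v := rfl
    rw [hveq, hp1, map_zero] at h
    exact h
  -- transfer to matrices over `L`
  set BL := B.map (algebraMap K L) with hBL
  have hBL0 : Polynomial.aeval BL (p.map (algebraMap A L)) = 0 := by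
    have h2 : Polynomial.eval₂ (algebraMap A (Module.End K V)) v p = 0 := by
      rwa [← Polynomial.aeval_def]
    set φ : (V →ₗ[K] V) →+* Matrix (Fin (Module.finrank K V)) (Fin (Module.finrank K V)) L :=
      ((algebraMap K L).mapMatrix).comp (e.toAlgHom.toRingHom) with hφ
    have h3 := Polynomial.hom_eval₂ p (algebraMap A (Module.End K V)) φ v
    rw [h2, map_zero] at h3
    have hφv : φ v = BL := by
      simp [hφ, heB, RingHom.mapMatrix_apply, hBL]
    have hcomp : φ.comp (algebraMap A (Module.End K V)) =
        (algebraMap L (Matrix (Fin (Module.finrank K V)) (Fin (Module.finrank K V)) L)).comp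
          (algebraMap A L) := by
      refine RingHom.ext fun a => ?_
      simp only [RingHom.comp_apply]
      rw [
        IsScalarTower.algebraMap_apply A K (Module.End K V),
        IsScalarTower.algebraMap_apply A K L]
      simp [hφ, Matrix.algebraMap_eq_diagonal, Matrix.diagonal_map]
    rw [hφv, hcomp] at h3
    rw [Polynomial.aeval_def, Polynomial.eval₂_map]
    exact h3.symm
  -- roots of the char poly of `BL` are integral over `A`
  have hroots : ∀ μ ∈ BL.charpoly.roots, μ ∈ integralClosure A L := by
    intro μ hμ
    have hroot : BL.charpoly.IsRoot μ := isRoot_of_mem_roots hμ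
    have hdet0 : (Matrix.scalar _ μ - BL).det = 0 := by
      have h1 : Matrix.scalar _ μ - BL = (charmatrix BL).map (Polynomial.evalRingHom μ) := by
        ext i j
        by_cases hij : i = j
        · subst hij
          simp [Matrix.sub_apply, Matrix.scalar_apply]
        · simp [charmatrix_apply_ne _ _ _ hij, Matrix.sub_apply, Matrix.scalar_apply,
            Matrix.diagonal_apply_ne _ hij]
      rw [h1, ← RingHom.mapMatrix_apply, ← RingHom.map_det]
      simpa [Matrix.charpoly] using hroot
    obtain ⟨x, hx0, hx⟩ := (Matrix.exists_mulVec_eq_zero_iff).2 hdet0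
    have heig : BL *ᵥ x = μ • x := by
      rw [Matrix.sub_mulVec, sub_eq_zero] at hx
      rw [← hx]
      funext i
      simp [Matrix.mulVec_diagonal, Matrix.scalar_apply]
    have hz := aeval_mulVec_eig BL heig (p.map (algebraMap A L))
    rw [hBL0, Matrix.zero_mulVec] at hz
    rcases smul_eq_zero.1 hz.symm with h | h
    · rw [Polynomial.eval_map] at h
      exact ⟨p, pmonic, h⟩
    · exact absurd h hx0
  -- determinant over `L` is the product of the roots
  have hdetL : algebraMap K L (LinearMap.det v) = BL.charpoly.roots.prod := by
    rw [hdet, RingHom.map_det, RingHom.mapMatrix_apply, ← hBL,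
      Matrix.det_eq_prod_roots_charpoly]
  have hint : IsIntegral A (algebraMap K L (LinearMap.det v)) := by
    rw [hdetL]
    exact multiset_prod_mem _ fun μ hμ => hroots μ hμ
  have hintK : IsIntegral A (LinearMap.det v) :=
    (isIntegral_algebraMap_iff ((algebraMap K L).injective)).1 hint
  obtain ⟨a, ha⟩ := IsIntegrallyClosed.isIntegral_iff.1 hintK
  exact ⟨a, ha.symm⟩
end

section
/- Let X be a normal integral scheme and f : X' → X a finite morphism of schemes. Then there exists an integer n ≥ 0 such that for every invertible O_X-module L, Nm_f(f*L) ≅ L^{⊗n} canonically, where Nm_f : Inv(X') → Inv(X) is the norm functor Nm_{f_*O_{X'}} ∘ f_*. -/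
open AlgebraicGeometry CategoryTheory Opposite TopologicalSpace
open scoped TensorProduct

namespace Paper

/-- Restriction of a section of the structure sheaf to a smaller open subset. -/
noncomputable def res (X : Scheme) {U V : X.Opens} (h : V ≤ U) (a : Γ(X, U)) : Γ(X, V) :=
  X.presheaf.map (homOfLE h).op a

/-- An invertible `O_X`-module (line bundle) presented by a trivializing open cover and a
multiplicative cocycle of transition functions. -/
structure LineBundle (X : Scheme) where
  ι : Type
  U : ι → X.Opens
  covers : ∀ x : X, ∃ i, x ∈ U i
  g : ∀ i j : ι, Γ(X, U i ⊓ U j)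
  isUnit : ∀ i j, IsUnit (g i j)
  cocycle : ∀ i j k : ι,
    res X (inf_le_left : U i ⊓ U j ⊓ U k ≤ U i ⊓ U j) (g i j) *
      res X (le_inf (inf_le_left.trans inf_le_right) inf_le_right :
        U i ⊓ U j ⊓ U k ≤ U j ⊓ U k) (g j k) =
    res X (le_inf (inf_le_left.trans inf_le_left) inf_le_right :
        U i ⊓ U j ⊓ U k ≤ U i ⊓ U k) (g i k)

/-- A global section of a line bundle, given in the trivializations. -/
structure LineBundle.GSection {X : Scheme} (L : LineBundle X) where
  s : ∀ i, Γ(X, L.U i)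
  compat : ∀ i j, res X inf_le_left (s i) = L.g i j * res X inf_le_right (s j)

/-- A section is regular if multiplication by it is injective, i.e. all its germs are
nonzerodivisors in the stalks. -/
def LineBundle.GSection.IsRegular {X : Scheme} {L : LineBundle X} (t : L.GSection) : Prop :=
  ∀ (i : L.ι) (x : X) (hx : x ∈ L.U i),
    X.presheaf.germ (L.U i) x hx (t.s i) ∈ nonZeroDivisors (X.presheaf.stalk x)

/-- The zero locus of a section of a line bundle. -/
def LineBundle.GSection.zeroLocus {X : Scheme} {L : LineBundle X} (t : L.GSection) : Set X :=
  {x : X | ∀ (i : L.ι) (hx : x ∈ L.U i),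
    ¬ IsUnit (X.presheaf.germ (L.U i) x hx (t.s i))}

/-- An isomorphism of line bundles, given by comparing trivializations. -/
structure LineBundle.Iso {X : Scheme} (L M : LineBundle X) where
  t : ∀ (i : L.ι) (a : M.ι), Γ(X, L.U i ⊓ M.U a)
  isUnit : ∀ i a, IsUnit (t i a)
  compat : ∀ (i j : L.ι) (a b : M.ι),
    res X (inf_le_left : (L.U i ⊓ M.U a) ⊓ (L.U j ⊓ M.U b) ≤ L.U i ⊓ M.U a) (t i a) *
      res X (le_inf (inf_le_left.trans inf_le_left) (inf_le_right.trans inf_le_left) :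
        (L.U i ⊓ M.U a) ⊓ (L.U j ⊓ M.U b) ≤ L.U i ⊓ L.U j) (L.g i j) =
    res X (le_inf (inf_le_left.trans inf_le_right) (inf_le_right.trans inf_le_right) :
        (L.U i ⊓ M.U a) ⊓ (L.U j ⊓ M.U b) ≤ M.U a ⊓ M.U b) (M.g a b) *
      res X (inf_le_right : (L.U i ⊓ M.U a) ⊓ (L.U j ⊓ M.U b) ≤ L.U j ⊓ M.U b) (t j b)

set_option synthInstance.maxHeartbeats 1000000 in
set_option maxHeartbeats 1000000 in
/-- Norm datum for a (finite) morphism `f : X' → X` over a normal base: a family of maps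
`Γ(X', f⁻¹ U) → Γ(X, U)`, natural in `U`, multiplicative, and computing at each point `x ∈ X`
the determinant of multiplication on `(f_* O_{X'})_x ⊗ Frac(O_{X,x})`. -/
structure NormDatum {X' X : Scheme} (f : X' ⟶ X) where
  Nm : ∀ U : X.Opens, Γ(X', f ⁻¹ᵁ U) → Γ(X, U)
  map_one : ∀ U : X.Opens, Nm U 1 = 1
  map_mul : ∀ (U : X.Opens) (a b : Γ(X', f ⁻¹ᵁ U)), Nm U (a * b) = Nm U a * Nm U b
  natural : ∀ (U V : X.Opens) (h : V ≤ U) (a : Γ(X', f ⁻¹ᵁ U)),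
    Nm V (res X' (show f ⁻¹ᵁ V ≤ f ⁻¹ᵁ U from fun x hx => h hx) a) = res X h (Nm U a)
  germ_det : ∀ (U : X.Opens) (x : X) (hx : x ∈ U) (a : Γ(X', f ⁻¹ᵁ U)),
    letI A := X.presheaf.stalk x
    letI B := (f.base _* X'.presheaf).stalk x
    letI : Algebra A B :=
      ((TopCat.Presheaf.stalkFunctor CommRingCat x).map f.c).hom.toAlgebra
    algebraMap A (FractionRing A) (X.presheaf.germ U x hx (Nm U a)) =
      LinearMap.det (LinearMap.mulLeft (FractionRing A)
        ((1 : FractionRing A) ⊗ₜ[A] ((f.base _* X'.presheaf).germ U x hx a)))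

/-- A scheme is normal if all of its local rings are integrally closed domains. -/
def IsNormalScheme (X : Scheme) : Prop :=
  ∀ x : X, IsDomain (X.presheaf.stalk x) ∧ IsIntegrallyClosed (X.presheaf.stalk x)

/-- Condition (*): a normal scheme each of whose points admits a neighbourhood meeting only
finitely many irreducible components. -/
def StarCondition (X : Scheme) : Prop :=
  IsNormalScheme X ∧
    ∀ x : X, ∃ U : X.Opens, x ∈ U ∧
      {C ∈ irreducibleComponents X | ((U : Set X) ∩ C).Nonempty}.Finite

set_option synthInstance.maxHeartbeats 1000000 in
set_option maxHeartbeats 1000000 in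
/-- Let `X` be a normal integral scheme and `f : X' → X` a finite morphism.
Then there exists an integer `n ≥ 0` such that for every invertible `O_X`-module `L`,
`Nm_f (f* L) ≅ L^{⊗n}` canonically, where `Nm_f` is the norm functor: in terms of cocycles,
the norm of the pulled-back transition functions of `L` differs from the `n`-th power of the
transition functions of `L` by the coboundary of a family of units. -/
theorem stmt_10 {X' X : Scheme} [AlgebraicGeometry.IsIntegral X]
    (hnormal : IsNormalScheme X)
    (f : X' ⟶ X) [IsFinite f] (D : NormDatum f) :
    ∃ n : ℕ, ∀ L : LineBundle X,
      ∃ s : ∀ i : L.ι, Γ(X, L.U i),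
        (∀ i, IsUnit (s i)) ∧
        ∀ i j : L.ι,
          D.Nm (L.U i ⊓ L.U j) (f.app (L.U i ⊓ L.U j) (L.g i j)) *
              res X (inf_le_right : L.U i ⊓ L.U j ≤ L.U j) (s j) =
            res X (inf_le_left : L.U i ⊓ L.U j ≤ L.U i) (s i) * (L.g i j) ^ n := by
  classical
  set η := genericPoint X with hηdef
  haveI : IsDomain (X.presheaf.stalk η) := (hnormal η).1
  letI A := X.presheaf.stalk η
  letI B := (f.base _* X'.presheaf).stalk η
  letI : Algebra A B :=
    ((TopCat.Presheaf.stalkFunctor CommRingCat η).map f.c).hom.toAlgebra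
  letI F := FractionRing A
  refine ⟨Module.finrank F (F ⊗[A] B), fun L => ⟨fun i => 1, fun i => isUnit_one, fun i j => ?_⟩⟩
  set n := Module.finrank F (F ⊗[A] B)
  have hres1 : ∀ {U V : X.Opens} (h : V ≤ U), res X h (1 : Γ(X, U)) = 1 := fun h => map_one _
  rw [hres1, hres1, mul_one, one_mul]
  set U := L.U i ⊓ L.U j with hU
  rcases (U : Set X).eq_empty_or_nonempty with hE | ⟨x0, hx0⟩
  · haveI : Subsingleton Γ(X, U) :=
      CommRingCat.subsingleton_of_isTerminal (X.sheaf.isTerminalOfEqEmpty (SetLike.ext' hE))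
    exact Subsingleton.elim _ _
  · have hηU : η ∈ U := (genericPoint_specializes x0).mem_open U.2 hx0
    apply germ_injective_of_isIntegral X η hηU
    apply IsFractionRing.injective A F
    rw [D.germ_det U η hηU (f.app U (L.g i j)), map_pow, map_pow]
    set c := X.presheaf.germ U η hηU (L.g i j) with hc
    have h1 : (f.base _* X'.presheaf).germ U η hηU (f.app U (L.g i j)) = algebraMap A B c := by
      change _ = ((TopCat.Presheaf.stalkFunctor CommRingCat η).map f.c).hom c
      exact (TopCat.Presheaf.stalkFunctor_map_germ_apply U η hηU f.c (L.g i j)).symm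
    rw [h1]
    have h2 : (1 : F) ⊗ₜ[A] (algebraMap A B c) = algebraMap F (F ⊗[A] B) (algebraMap A F c) := by
      rw [Algebra.TensorProduct.algebraMap_apply, Algebra.algebraMap_self_apply,
        Algebra.algebraMap_eq_smul_one (R := A) (A := B) c, ← TensorProduct.smul_tmul,
        ← Algebra.algebraMap_eq_smul_one]
    rw [h2]
    have h3 : LinearMap.mulLeft F (algebraMap F (F ⊗[A] B) (algebraMap A F c)) =
        (algebraMap A F c) • (LinearMap.id : (F ⊗[A] B) →ₗ[F] (F ⊗[A] B)) :=
      LinearMap.ext fun y => (Algebra.smul_def _ y).symm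
    rw [h3, LinearMap.det_smul, LinearMap.det_id, mul_one]
end Paper
end

section
/- Let X be a normal scheme satisfying (*) and f : X' → X a finite morphism. The norm functor Nm_f : Inv(X') → Inv(X) preserves injective homomorphisms: if h : L₁ → L₂ is an injective homomorphism of invertible O_{X'}-modules, then Nm_f(h) : Nm_f(L₁) → Nm_f(L₂) is injective. In particular, Nm_f carries regular sections of invertible sheaves to regular sections. -/
open AlgebraicGeometry CategoryTheory Opposite TopologicalSpace
open scoped TensorProduct

namespace Paper

universe u


open MorphismProperty in
private lemma aux_closed {S T : Scheme} (g : S ⟶ T) [IsAffine S] [IsAffine T]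
    (h2 : RingHom.Finite g.appTop.hom) : IsClosedMap g.base := by
  have hnat : g = S.isoSpec.hom ≫ Spec.map g.appTop ≫ T.isoSpec.inv := by
    rw [← Category.assoc, Scheme.isoSpec_hom_naturality, Category.assoc, Iso.hom_inv_id,
      Category.comp_id]
  rw [hnat]
  simp only [Scheme.Hom.comp_base, TopCat.coe_comp]
  refine ((Scheme.homeoOfIso T.isoSpec.symm).isClosedMap.comp ?_).comp
    (Scheme.homeoOfIso S.isoSpec).isClosedMap
  rw [Spec.map_base]
  exact PrimeSpectrum.isClosedMap_comap_of_isIntegral _ h2.to_isIntegral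

open MorphismProperty in
private lemma isClosedMap_of_isFinite {X' X : Scheme} (f : X' ⟶ X) [IsFinite f] :
    IsClosedMap f.base := by
  show topologically @IsClosedMap f
  rw [IsZariskiLocalAtTarget.iff_of_openCover (P := topologically @IsClosedMap) X.affineCover]
  intro i
  have hfin : IsFinite (X.affineCover.pullbackHom f i) :=
    show IsFinite (Limits.pullback.snd _ _) from inferInstance
  obtain ⟨h1, h2⟩ : IsAffine _ ∧ RingHom.Finite (X.affineCover.pullbackHom f i).appTop.hom :=
    ⟨isAffine_of_isAffineHom (X.affineCover.pullbackHom f i),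
      (X.affineCover.pullbackHom f i).finite_app ⊤ (isAffineOpen_top _)⟩
  letI := h1
  exact aux_closed _ h2


private lemma det_mulLeft_ne_zero {A : Type u} [CommRing A] [IsDomain A]
    {B : Type u} [CommRing B] [Algebra A B] {b : B} (hb : b ∈ nonZeroDivisors B) :
    LinearMap.det (LinearMap.mulLeft (FractionRing A)
      ((1 : FractionRing A) ⊗ₜ[A] b)) ≠ 0 := by
  set K := FractionRing A
  have hflat : Module.Flat A K := IsLocalization.flat K (nonZeroDivisors A)
  have hmul : Function.Injective (LinearMap.mulLeft A b) := by
    intro y z hyz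
    simp only [LinearMap.mulLeft_apply] at hyz
    have h0 : (y - z) * b = 0 := by
      rw [sub_mul, mul_comm y b, mul_comm z b, hyz, sub_self]
    exact sub_eq_zero.mp (mem_nonZeroDivisors_iff_right.mp hb _ h0)
  have h1 : ∀ w : K ⊗[A] B, LinearMap.mulLeft K ((1 : K) ⊗ₜ[A] b) w
      = (LinearMap.mulLeft A b).lTensor K w := by
    intro w
    induction w with
    | zero => simp
    | tmul k y =>
        simp [LinearMap.mulLeft_apply, Algebra.TensorProduct.tmul_mul_tmul]
    | add u v hu hv => simp only [map_add, hu, hv]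
  have hinj : Function.Injective (LinearMap.mulLeft K ((1 : K) ⊗ₜ[A] b)) := by
    rw [show ⇑(LinearMap.mulLeft K ((1 : K) ⊗ₜ[A] b))
        = ⇑((LinearMap.mulLeft A b).lTensor K) from funext h1]
    exact Module.Flat.lTensor_preserves_injective_linearMap _ hmul
  intro h0
  obtain ⟨y, hy, hy0⟩ := SetLike.exists_of_lt (LinearMap.bot_lt_ker_of_det_eq_zero h0)
  exact hy0 (by
    rw [Submodule.mem_bot]
    exact hinj (by rw [LinearMap.mem_ker.mp hy, map_zero]))


private lemma pushforward_germ_nzd {X' X : Scheme} (f : X' ⟶ X) (hcl : IsClosedMap f.base)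
    (U : X.Opens) (x : X) (hx : x ∈ U) (s : Γ(X', f ⁻¹ᵁ U))
    (hs : ∀ (x' : X') (hx' : x' ∈ f ⁻¹ᵁ U),
      X'.presheaf.germ (f ⁻¹ᵁ U) x' hx' s ∈ nonZeroDivisors (X'.presheaf.stalk x')) :
    (f.base _* X'.presheaf).germ U x hx s ∈
      nonZeroDivisors ((f.base _* X'.presheaf).stalk x) := by
  set P := f.base _* X'.presheaf with hPdef
  rw [mem_nonZeroDivisors_iff_right]
  intro u hu
  obtain ⟨V, hxV, t, rfl⟩ := TopCat.Presheaf.germ_exist P (x := x) u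
  have hxVU : x ∈ V ⊓ U := ⟨hxV, hx⟩
  have key : P.germ (V ⊓ U) x hxVU
      (P.map (homOfLE (inf_le_left : V ⊓ U ≤ V)).op t *
       P.map (homOfLE (inf_le_right : V ⊓ U ≤ U)).op s) = 0 := by
    rw [map_mul, P.germ_res_apply, P.germ_res_apply]
    exact hu
  obtain ⟨W₀, hxW₀, i1, i2, heq⟩ := P.germ_eq x hxVU hxVU _ 0 (by rw [key, map_zero])
  -- q and r are restrictions of t and s to f ⁻¹ᵁ W₀
  set q : Γ(X', f ⁻¹ᵁ W₀) :=
    P.map i1.op (P.map (homOfLE (inf_le_left : V ⊓ U ≤ V)).op t) with hqdef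
  set r : Γ(X', f ⁻¹ᵁ W₀) :=
    P.map i1.op (P.map (homOfLE (inf_le_right : V ⊓ U ≤ U)).op s) with hrdef
  have hqr : q * r = 0 := by
    rw [hqdef, hrdef, (map_mul (P.map i1.op).hom _ _).symm, heq, map_zero]
  -- `P.map j.op` is a restriction map of `X'`
  have hPmap : ∀ (V₁ V₂ : X.Opens) (j : V₁ ⟶ V₂) (a : Γ(X', f ⁻¹ᵁ V₂)),
      P.map j.op a = X'.presheaf.map (homOfLE
        (show f ⁻¹ᵁ V₁ ≤ f ⁻¹ᵁ V₂ from fun y hy => leOfHom j hy)).op a :=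
    fun _ _ _ _ => rfl
  -- every point of the fiber has vanishing germ of q
  have hfiber : ∀ y : X', f.base y = x → ∃ (hy : y ∈ f ⁻¹ᵁ W₀),
      X'.presheaf.germ (f ⁻¹ᵁ W₀) y hy q = 0 := by
    intro y hfy
    have hyW : y ∈ f ⁻¹ᵁ W₀ := show f.base y ∈ W₀ by rw [hfy]; exact hxW₀
    have hyU : y ∈ f ⁻¹ᵁ U := show f.base y ∈ U by rw [hfy]; exact hx
    refine ⟨hyW, ?_⟩
    have hr : X'.presheaf.germ (f ⁻¹ᵁ W₀) y hyW r
        = X'.presheaf.germ (f ⁻¹ᵁ U) y hyU s := by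
      rw [hrdef, hPmap, hPmap, X'.presheaf.germ_res_apply, X'.presheaf.germ_res_apply]
    have h0 : X'.presheaf.germ (f ⁻¹ᵁ W₀) y hyW q
        * X'.presheaf.germ (f ⁻¹ᵁ W₀) y hyW r = 0 := by
      rw [← map_mul, hqr, map_zero]
    rw [hr] at h0
    exact mem_nonZeroDivisors_iff_right.mp (hs y hyU) _ h0
  -- the germ-vanishing locus of q is open
  set O : Set X' := {y | ∃ (hy : y ∈ f ⁻¹ᵁ W₀),
    X'.presheaf.germ (f ⁻¹ᵁ W₀) y hy q = 0} with hOdef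
  have hO : IsOpen O := by
    rw [isOpen_iff_forall_mem_open]
    rintro y ⟨hy, hgy⟩
    obtain ⟨N, hyN, iN, iN', h0⟩ :=
      X'.presheaf.germ_eq y hy hy q 0 (by rw [hgy, map_zero])
    refine ⟨N, ?_, N.2, hyN⟩
    intro z hz
    refine ⟨leOfHom iN hz, ?_⟩
    rw [← X'.presheaf.germ_res_apply iN z hz q, h0, map_zero, map_zero]
  -- x is not in the image of the complement of O
  have hxC : x ∉ f.base '' Oᶜ := by
    rintro ⟨y, hy, hyx⟩
    exact hy (hfiber y hyx)
  set V₂ : X.Opens := W₀ ⊓ ⟨(f.base '' Oᶜ)ᶜ, (hcl _ hO.isClosed_compl).isOpen_compl⟩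
    with hV₂def
  have hxV₂ : x ∈ V₂ := ⟨hxW₀, hxC⟩
  have hsub : (f ⁻¹ᵁ V₂ : Set X') ⊆ O := by
    intro y hy
    by_contra hyO
    exact hy.2 ⟨y, hyO, rfl⟩
  -- the restriction of q to f ⁻¹ᵁ V₂ vanishes
  have hres : X'.presheaf.map (homOfLE
      (show f ⁻¹ᵁ V₂ ≤ f ⁻¹ᵁ W₀ from fun y hy => hy.1)).op q = 0 := by
    apply TopCat.Presheaf.section_ext X'.sheaf (f ⁻¹ᵁ V₂)
    intro y hy
    obtain ⟨hyW, hq0⟩ := hsub hy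
    have : X'.presheaf.germ (f ⁻¹ᵁ V₂) y hy (X'.presheaf.map (homOfLE
        (show f ⁻¹ᵁ V₂ ≤ f ⁻¹ᵁ W₀ from fun z hz => hz.1)).op q)
        = X'.presheaf.germ (f ⁻¹ᵁ V₂) y hy 0 := by
      rw [X'.presheaf.germ_res_apply, map_zero]
      exact hq0
    exact this
  -- conclude
  rw [← P.germ_res_apply (homOfLE (inf_le_left : V ⊓ U ≤ V)) x hxVU t,
    ← P.germ_res_apply i1 x hxW₀, ← hqdef,
    ← P.germ_res_apply (homOfLE (inf_le_left : V₂ ≤ W₀)) x hxV₂ q,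
    hPmap, hres, map_zero]


/-- Let `X` be a normal scheme satisfying (*) and `f : X' → X` a finite
morphism.  The norm functor `Nm_f` preserves injective homomorphisms: if `h : L₁ → L₂` is an
injective homomorphism of invertible `O_{X'}`-modules (given here in trivializations over a
cover of `X'` by preimages of opens of `X`, as provided by Lemma `stmt_8`), then
`Nm_f h : Nm_f L₁ → Nm_f L₂` is injective.  In particular `Nm_f` carries regular sections to
regular sections. -/
theorem stmt_11 {X' X : Scheme} (hstar : StarCondition X)
    (f : X' ⟶ X) [IsFinite f] (D : NormDatum f)
    -- a common trivializing cover by preimages of opens of `X`: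
    (κ : Type) (W : κ → X.Opens)
    (hcoversX : ∀ x : X, ∃ a, x ∈ W a)
    (hcovers : ∀ x' : X', ∃ a, x' ∈ f ⁻¹ᵁ W a)
    -- the invertible `O_{X'}`-modules `L₁`, `L₂`, by their cocycles:
    (g₁ g₂ : ∀ a b : κ, Γ(X', f ⁻¹ᵁ (W a ⊓ W b)))
    (hg₁ : ∀ a b, IsUnit (g₁ a b)) (hg₂ : ∀ a b, IsUnit (g₂ a b))
    -- the homomorphism `h : L₁ → L₂`:
    (h : ∀ a : κ, Γ(X', f ⁻¹ᵁ (W a)))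
    (hcompat : ∀ a b : κ,
      res X' (show f ⁻¹ᵁ (W a ⊓ W b) ≤ f ⁻¹ᵁ W a from fun x hx => hx.1) (h a) * g₁ a b =
        g₂ a b *
          res X' (show f ⁻¹ᵁ (W a ⊓ W b) ≤ f ⁻¹ᵁ W b from fun x hx => hx.2) (h b))
    -- `h` is injective:
    (hinj : ∀ (a : κ) (x' : X') (hx' : x' ∈ f ⁻¹ᵁ W a),
      X'.presheaf.germ (f ⁻¹ᵁ W a) x' hx' (h a) ∈ nonZeroDivisors (X'.presheaf.stalk x')) :
    -- conclusion: `Nm_f h` is an injective homomorphism `Nm_f L₁ → Nm_f L₂`: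
    (∀ a b : κ,
      res X (inf_le_left : W a ⊓ W b ≤ W a) (D.Nm (W a) (h a)) *
          D.Nm (W a ⊓ W b) (g₁ a b) =
        D.Nm (W a ⊓ W b) (g₂ a b) *
          res X (inf_le_right : W a ⊓ W b ≤ W b) (D.Nm (W b) (h b))) ∧
    (∀ (a : κ) (x : X) (hx : x ∈ W a),
      X.presheaf.germ (W a) x hx (D.Nm (W a) (h a)) ∈
        nonZeroDivisors (X.presheaf.stalk x)) := by
  constructor
  · intro a b
    have H := congrArg (D.Nm (W a ⊓ W b)) (hcompat a b)
    rw [D.map_mul, D.map_mul,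
      D.natural (W a) (W a ⊓ W b) inf_le_left (h a),
      D.natural (W b) (W a ⊓ W b) inf_le_right (h b)] at H
    exact H
  · intro a x hx
    haveI hdom : IsDomain (X.presheaf.stalk x) := (hstar.1 x).1
    letI A := X.presheaf.stalk x
    letI B := (f.base _* X'.presheaf).stalk x
    letI : Algebra A B :=
      ((TopCat.Presheaf.stalkFunctor CommRingCat x).map f.c).hom.toAlgebra
    apply mem_nonZeroDivisors_of_ne_zero
    intro h0
    have hd := D.germ_det (W a) x hx (h a)
    rw [h0, map_zero] at hd
    have hb : (f.base _* X'.presheaf).germ (W a) x hx (h a) ∈ nonZeroDivisors B :=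
      pushforward_germ_nzd f (isClosedMap_of_isFinite f) (W a) x hx (h a) (hinj a)
    exact det_mulLeft_ne_zero hb hd.symm
end Paper
end
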